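/- arXiv:1411.5958 — 8 statements merged into one kernel-verified Lean document; each statement's English description precedes it below -/
import Mathlib

section
/- Let P be a finite multiset of vectors in a finite-dimensional vector space and q ≥ 0. If P is q-stable (its linear span is unchanged after removing any at most q vectors, counted with multiplicity) and P contains at least one nonzero vector, then the number of nonzero vectors in P (with multiplicity) is at least dim(span P) + q. -/
open scoped Classical

/-- The linear span of (the set of elements of) a multiset of vectors. -/
def mSpan (F : Type*) {V : Type*} [Field F] [AddCommGroup V] [Module F V]
    (P : Multiset V) : Submodule F V :=
  Submodule.span F {x | x ∈ P}

/-- A finite multiset `P` of vectors is `q`-stable if its linear span is unchanged after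
removing any at most `q` vectors (counted with multiplicity). -/
def QStable (F : Type*) {V : Type*} [Field F] [AddCommGroup V] [Module F V]
    (q : ℕ) (P : Multiset V) : Prop :=
  ∀ S : Multiset V, S ≤ P → Multiset.card S ≤ q → mSpan F (P - S) = mSpan F P

/-- The number of nonzero vectors of a multiset, with multiplicity. -/
noncomputable def nnz {V : Type*} [Zero V] (P : Multiset V) : ℕ :=
  Multiset.card (Multiset.filter (fun v => v ≠ 0) P)

lemma mSpan_filter (F : Type*) {V : Type*} [Field F] [AddCommGroup V] [Module F V]
    (P : Multiset V) : mSpan F (Multiset.filter (fun v => v ≠ 0) P) = mSpan F P := by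
  apply le_antisymm
  · exact Submodule.span_mono (fun x hx => (Multiset.mem_filter.mp hx).1)
  · rw [mSpan, Submodule.span_le]
    intro x hx
    by_cases h : x = 0
    · simp [h]
    · exact Submodule.subset_span (Multiset.mem_filter.mpr ⟨hx, h⟩)

lemma finrank_mSpan_le {F V : Type*} [Field F] [AddCommGroup V] [Module F V]
    [FiniteDimensional F V] (P : Multiset V) :
    Module.finrank F (mSpan F P) ≤ Multiset.card P := by
  have h1 : Module.finrank F (mSpan F P) ≤ P.toFinset.card := by
    have hset : ({x | x ∈ P} : Set V) = ↑P.toFinset := by ext x; simp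
    rw [mSpan, hset]
    simpa [Set.finrank] using finrank_span_finset_le_card (R := F) P.toFinset
  exact h1.trans (Multiset.toFinset_card_le P)

/-- If `P` is `q`-stable and contains at least one nonzero vector, then the number of
nonzero vectors of `P` (with multiplicity) is at least `dim (span P) + q`. -/
theorem stmt_0 {F V : Type*} [Field F] [AddCommGroup V] [Module F V] [FiniteDimensional F V]
    (q : ℕ) (P : Multiset V) (hP : QStable F q P) (hnt : ∃ v ∈ P, v ≠ 0) :
    Module.finrank F (mSpan F P) + q ≤ nnz P := by
  induction q generalizing P with
  | zero =>
    simp only [Nat.add_zero]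
    calc Module.finrank F (mSpan F P)
        = Module.finrank F (mSpan F (Multiset.filter (fun v => v ≠ 0) P)) := by
          rw [mSpan_filter]
      _ ≤ nnz P := finrank_mSpan_le _
  | succ q ih =>
    obtain ⟨v, hvP, hv0⟩ := hnt
    have hvle : ({v} : Multiset V) ≤ P := Multiset.singleton_le.mpr hvP
    set P' := P - {v} with hP'
    have hspan : mSpan F P' = mSpan F P := hP {v} hvle (by simp)
    have hstab : QStable F q P' := by
      intro S hS hcard
      have h1 : P' - S = P - ({v} + S) := (tsub_add_eq_tsub_tsub P {v} S).symm
      have h2 : {v} + S ≤ P := (le_tsub_iff_left hvle).mp hS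
      rw [h1, hP ({v} + S) h2 (by simp; omega), hspan]
    have hnt' : ∃ w ∈ P', w ≠ 0 := by
      by_contra h
      push_neg at h
      have hbot : mSpan F P' ≤ ⊥ := by
        rw [mSpan, Submodule.span_le]
        intro x hx
        simp [h x hx]
      have hv : v ∈ mSpan F P := Submodule.subset_span hvP
      rw [← hspan] at hv
      exact hv0 (by simpa using hbot hv)
    have hvf : v ∈ Multiset.filter (fun w => w ≠ 0) P := by
      simp [hvP, hv0]
    have hfilter : Multiset.filter (fun w => w ≠ 0) P'
        = Multiset.filter (fun w => w ≠ 0) P - {v} := by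
      rw [hP', Multiset.filter_sub]
      congr 1
      rw [Multiset.filter_singleton]
      simp [hv0]
    have hnnz : nnz P' + 1 = nnz P := by
      rw [nnz, hfilter, Multiset.card_sub (Multiset.singleton_le.mpr hvf)]
      have : 1 ≤ Multiset.card (Multiset.filter (fun w => w ≠ 0) P) :=
        Multiset.card_pos_iff_exists_mem.mpr ⟨v, hvf⟩
      simp only [Multiset.card_singleton, nnz]
      omega
    have := ih P' hstab hnt'
    rw [hspan] at this
    omega
end

section
/- Let P be a q-stable finite multiset of vectors in a finite-dimensional vector space with at most dim(span P) + q nonzero vectors (with multiplicity). Then any collection of at most dim(span P) nonzero vectors of P is linearly independent. -/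
open scoped Classical

section Aux

variable {F V : Type*} [Field F] [AddCommGroup V] [Module F V]

lemma mSpan_mono {A B : Multiset V} (h : A ≤ B) : mSpan F A ≤ mSpan F B :=
  Submodule.span_mono (fun _ hx => Multiset.mem_of_le h hx)

lemma mSpan_filter_ne_zero (P : Multiset V) :
    mSpan F (Multiset.filter (fun v => v ≠ 0) P) = mSpan F P := by
  apply le_antisymm (mSpan_mono (Multiset.filter_le _ _))
  rw [mSpan, Submodule.span_le]
  intro x hx
  by_cases hx0 : x = 0
  · simp [hx0]
  · exact Submodule.subset_span (Multiset.mem_filter.mpr ⟨hx, hx0⟩)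

lemma mSpan_add (A B : Multiset V) : mSpan F (A + B) = mSpan F A ⊔ mSpan F B := by
  rw [mSpan, mSpan, mSpan, ← Submodule.span_union]
  congr 1
  ext x
  simp

lemma finrank_mSpan_le_card (X : Multiset V) :
    Module.finrank F (mSpan F X) ≤ Multiset.card X := by
  have hset : {x | x ∈ X} = (X.toFinset : Set V) := by ext x; simp
  rw [mSpan, hset]
  exact le_trans (finrank_span_finset_le_card (R := F) X.toFinset)
    (Multiset.toFinset_card_le X)

lemma exists_le_card {α : Type*} (s : Multiset α) (k : ℕ) (h : k ≤ Multiset.card s) :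
    ∃ t ≤ s, Multiset.card t = k := by
  refine ⟨(s.toList.take k : List α), ?_, ?_⟩
  · have h1 : ((s.toList.take k : List α) : Multiset α) ≤ (s.toList : Multiset α) :=
      (List.take_sublist _ _).subperm
    simpa [s.coe_toList] using h1
  · have hlen : s.toList.length = Multiset.card s := Multiset.length_toList s
    simp [List.length_take, hlen, h]

end Aux

/-- In a `q`-stable multiset `P` with at most `dim (span P) + q` nonzero vectors, any
collection of at most `dim (span P)` nonzero vectors of `P` is linearly independent
(equivalently, spans a subspace of dimension equal to its cardinality). -/
theorem stmt_1 {F V : Type*} [Field F] [AddCommGroup V] [Module F V] [FiniteDimensional F V]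
    (q : ℕ) (P : Multiset V) (hP : QStable F q P)
    (hcard : nnz P ≤ Module.finrank F (mSpan F P) + q) :
    ∀ S : Multiset V, S ≤ P → (∀ v ∈ S, v ≠ 0) →
      Multiset.card S ≤ Module.finrank F (mSpan F P) →
      Module.finrank F (mSpan F S) = Multiset.card S := by
  intro S hSP hS0 hScard
  set n := Module.finrank F (mSpan F P) with hn
  refine le_antisymm (finrank_mSpan_le_card S) ?_
  by_contra hlt
  push_neg at hlt
  set P₀ := Multiset.filter (fun v => (v : V) ≠ 0) P with hP₀
  have hS₀ : S ≤ P₀ := Multiset.le_filter.mpr ⟨hSP, hS0⟩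
  have hmn : n ≤ Multiset.card P₀ := by
    calc n = Module.finrank F (mSpan F P₀) := by rw [hP₀, mSpan_filter_ne_zero]
    _ ≤ Multiset.card P₀ := finrank_mSpan_le_card _
  have hcardsub : Multiset.card (P₀ - S) = Multiset.card P₀ - Multiset.card S :=
    Multiset.card_sub hS₀
  obtain ⟨X, hX, hXcard⟩ : ∃ X ≤ P₀ - S, Multiset.card X = n - Multiset.card S :=
    exists_le_card _ _ (by omega)
  set S' := S + X with hS'
  have hS'P₀ : S' ≤ P₀ := by
    rw [hS', add_comm]
    exact (le_tsub_iff_right hS₀).mp hX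
  have hS'card : Multiset.card S' = n := by
    rw [hS', Multiset.card_add, hXcard]
    omega
  set R := P₀ - S' with hR
  have hRP : R ≤ P := le_trans tsub_le_self (Multiset.filter_le _ P)
  have hRcard : Multiset.card R ≤ q := by
    have h1 : Multiset.card R = Multiset.card P₀ - Multiset.card S' :=
      Multiset.card_sub hS'P₀
    have h2 : nnz P = Multiset.card P₀ := rfl
    omega
  have hspan : mSpan F (P - R) = mSpan F P := hP R hRP hRcard
  have hfil : Multiset.filter (fun v => (v : V) ≠ 0) (P - R) = S' := by
    rw [Multiset.filter_sub]
    have hRfil : Multiset.filter (fun v => (v : V) ≠ 0) R = R :=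
      Multiset.filter_eq_self.mpr (fun a ha => by
        have haP : a ∈ P₀ := Multiset.mem_of_le tsub_le_self ha
        exact (Multiset.mem_filter.mp haP).2)
    rw [hRfil, ← hP₀, hR]
    exact tsub_tsub_cancel_of_le hS'P₀
  have hPR : mSpan F (P - R) = mSpan F S' := by
    rw [← mSpan_filter_ne_zero (P - R), hfil]
  have hb : Module.finrank F (mSpan F S') ≤
      Module.finrank F (mSpan F S) + Multiset.card X := by
    rw [hS', mSpan_add]
    exact le_trans (Submodule.finrank_add_le_finrank_add_finrank _ _)
      (by gcongr; exact finrank_mSpan_le_card X)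
  have hbig : n ≤ Module.finrank F (mSpan F S') := by
    rw [← hPR, hspan]
  omega
end

section
/- Let P be a 1-stable finite multiset of vectors in a finite-dimensional vector space over a field. Define two elements a, b of P to be equivalent if for every linear relation Σ_{v∈P} c_v v = 0 among the elements of P (with coefficients indexed by the multiset), the coefficients c_a and c_b are simultaneously zero or simultaneously nonzero. Then P is 2-stable if and only if no two distinct elements of P are equivalent. -/
open scoped Classical

/-- Two elements (positions) `a`, `b` of the finite family `p : ι → V` are equivalent if
for every linear relation `∑ i, c i • p i = 0` the coefficients at `a` and at `b` are
simultaneously zero or simultaneously nonzero. -/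
def LinEquivRel (F : Type*) {V ι : Type*} [Field F] [AddCommGroup V] [Module F V]
    [Fintype ι] (p : ι → V) (a b : ι) : Prop :=
  ∀ c : ι → F, ∑ i, c i • p i = 0 → (c a = 0 ↔ c b = 0)

lemma aux_mem_sub {V ι : Type*} [Fintype ι] (p : ι → V) (s : Finset ι) :
    {x | x ∈ Multiset.map p Finset.univ.val - Multiset.map p s.val} = p '' ((↑s : Set ι)ᶜ) := by
  classical
  ext v
  simp only [Set.mem_setOf_eq, ← Multiset.count_pos, Multiset.count_sub, Multiset.count_map]
  rw [Nat.sub_pos_iff_lt]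
  have hval : ∀ (t : Finset ι), Multiset.card (Multiset.filter (fun a => v = p a) t.val)
      = (t.filter (fun a => v = p a)).card := by
    intro t
    simp [Finset.card, Finset.filter]
  rw [hval, hval]
  constructor
  · intro h
    by_contra hcon
    have : Finset.univ.filter (fun a => v = p a) ⊆ s.filter (fun a => v = p a) := by
      intro i hi
      simp only [Finset.mem_filter, Finset.mem_univ, true_and] at hi
      refine Finset.mem_filter.2 ⟨?_, hi⟩
      by_contra hi'
      exact hcon ⟨i, by simpa using hi', hi.symm⟩
    exact absurd (Finset.card_le_card this) (by omega)
  · rintro ⟨i, hi, rfl⟩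
    apply Finset.card_lt_card
    constructor
    · exact Finset.filter_subset_filter _ (Finset.subset_univ s)
    · intro hsub
      have := hsub (by simp : i ∈ Finset.univ.filter (fun a => p i = p a))
      simp at this
      exact hi this

lemma aux_mem_span_image {F V ι : Type*} [Field F] [AddCommGroup V] [Module F V] [Fintype ι]
    (p : ι → V) (s : Set ι) (x : V) :
    x ∈ Submodule.span F (p '' s) ↔
      ∃ c : ι → F, (∀ i ∉ s, c i = 0) ∧ ∑ i, c i • p i = x := by
  classical
  rw [Finsupp.mem_span_image_iff_linearCombination]
  constructor
  · rintro ⟨l, hl, rfl⟩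
    rw [Finsupp.mem_supported] at hl
    refine ⟨l, fun i hi => ?_, ?_⟩
    · by_contra h
      exact hi (hl (Finsupp.mem_support_iff.2 h))
    · rw [Finsupp.linearCombination_apply, Finsupp.sum_fintype]
      intro i; simp
  · rintro ⟨c, hc, rfl⟩
    refine ⟨Finsupp.equivFunOnFinite.symm c, ?_, ?_⟩
    · rw [Finsupp.mem_supported]
      intro i hi
      rw [Finset.mem_coe, Finsupp.mem_support_iff] at hi
      by_contra h
      exact hi (hc i h)
    · rw [Finsupp.linearCombination_apply, Finsupp.sum_fintype]
      · rfl
      · intro i; simp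

section Aux
variable {F V ι : Type*} [Field F] [AddCommGroup V] [Module F V] [Fintype ι]

lemma aux_sum_update (p : ι → V) (f : ι → F) (a : ι) (r : F) :
    ∑ i, Function.update f a r i • p i = ∑ i, f i • p i - f a • p a + r • p a := by
  classical
  have hupd : ∀ x, Function.update f a r x • p x
      = Function.update (fun j => f j • p j) a (r • p a) x := by
    intro x
    by_cases h : x = a
    · subst h; simp
    · simp [h]
  rw [Finset.sum_congr rfl fun x _ => hupd x,
    Finset.sum_update_of_mem (Finset.mem_univ a),
    Finset.sum_eq_sum_sdiff_singleton_add (Finset.mem_univ a) (fun j => f j • p j)]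
  abel

lemma aux_pa_mem (p : ι → V) {a b : ι} {c : ι → F} (hrel : ∑ i, c i • p i = 0)
    (ha : c a ≠ 0) (hb : c b = 0) :
    p a ∈ Submodule.span F (p '' ({a, b} : Set ι)ᶜ) := by
  classical
  rw [aux_mem_span_image]
  refine ⟨Function.update (fun j => -(c a)⁻¹ * c j) a 0, ?_, ?_⟩
  · intro i hi
    have hi' : i = a ∨ i = b := by
      by_contra hcon
      push_neg at hcon
      exact hi (by simp [hcon.1, hcon.2])
    rcases hi' with rfl | rfl
    · simp
    · by_cases h : i = a
      · subst h; simp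
      · rw [Function.update_of_ne h]; simp [hb]
  · rw [aux_sum_update]
    have h1 : ∑ i, (-(c a)⁻¹ * c i) • p i = 0 := by
      rw [Finset.sum_congr rfl fun i _ => mul_smul (-(c a)⁻¹) (c i) (p i),
        ← Finset.smul_sum, hrel, smul_zero]
    rw [h1]
    simp only [neg_mul, neg_smul, zero_sub, neg_neg, zero_smul, add_zero]
    rw [inv_mul_cancel₀ ha, one_smul]

lemma aux_other (p : ι → V) (h1 : QStable F 1 (Multiset.map p Finset.univ.val)) (a b : ι)
    (hpa : p a ∈ Submodule.span F (p '' ({a, b} : Set ι)ᶜ)) :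
    p b ∈ Submodule.span F (p '' ({a, b} : Set ι)ᶜ) := by
  classical
  have hsingle : ({p b} : Multiset V) = Multiset.map p ({b} : Finset ι).val := by simp
  have hb1 : mSpan F (Multiset.map p Finset.univ.val - {p b})
      = mSpan F (Multiset.map p Finset.univ.val) := by
    refine h1 {p b} ?_ (by simp)
    simp only [Multiset.singleton_le]
    exact Multiset.mem_map.mpr ⟨b, Finset.mem_univ b, rfl⟩
  have hset : mSpan F (Multiset.map p Finset.univ.val - {p b})
      = Submodule.span F (p '' ({b} : Set ι)ᶜ) := by
    rw [hsingle]
    unfold mSpan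
    rw [aux_mem_sub]
    simp
  have hpb : p b ∈ Submodule.span F (p '' ({b} : Set ι)ᶜ) := by
    rw [← hset, hb1]
    refine Submodule.subset_span ?_
    simp only [Set.mem_setOf_eq, Multiset.mem_map]
    exact ⟨b, Finset.mem_univ b, rfl⟩
  refine Submodule.span_le.mpr ?_ hpb
  rintro v ⟨i, hi, rfl⟩
  simp only [Set.mem_compl_iff, Set.mem_singleton_iff] at hi
  by_cases h : i = a
  · subst h; exact hpa
  · exact Submodule.subset_span ⟨i, by simp [h, hi], rfl⟩

lemma aux_pair (p : ι → V) (h1 : QStable F 1 (Multiset.map p Finset.univ.val)) {a b : ι}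
    (hab : a ≠ b) (hne : ¬ LinEquivRel F p a b) :
    mSpan F (Multiset.map p Finset.univ.val - {p a, p b})
      = mSpan F (Multiset.map p Finset.univ.val) := by
  classical
  have hpairval : ({p a, p b} : Multiset V) = Multiset.map p ({a, b} : Finset ι).val := by
    rw [Finset.insert_val_of_notMem (by simpa using hab)]
    simp
  have hset : mSpan F (Multiset.map p Finset.univ.val - {p a, p b})
      = Submodule.span F (p '' ({a, b} : Set ι)ᶜ) := by
    rw [hpairval]
    unfold mSpan
    rw [aux_mem_sub]
    simp
  unfold LinEquivRel at hne
  push_neg at hne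
  obtain ⟨c, hrel, hiff⟩ := hne
  have hmem : p a ∈ Submodule.span F (p '' ({a, b} : Set ι)ᶜ) ∧
      p b ∈ Submodule.span F (p '' ({a, b} : Set ι)ᶜ) := by
    by_cases hca : c a = 0
    · have hcb : c b ≠ 0 := by tauto
      have hpb := aux_pa_mem (a := b) (b := a) p hrel hcb hca
      rw [Set.pair_comm b a] at hpb
      have hpa := aux_other p h1 b a (by rwa [Set.pair_comm a b] at hpb)
      rw [Set.pair_comm b a] at hpa
      exact ⟨hpa, hpb⟩
    · have hcb : c b = 0 := by tauto
      have hpa := aux_pa_mem p hrel hca hcb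
      exact ⟨hpa, aux_other p h1 a b hpa⟩
  rw [hset]
  unfold mSpan
  apply le_antisymm
  · apply Submodule.span_le.mpr
    rintro v ⟨i, -, rfl⟩
    refine Submodule.subset_span ?_
    simp only [Set.mem_setOf_eq, Multiset.mem_map]
    exact ⟨i, Finset.mem_univ i, rfl⟩
  · apply Submodule.span_le.mpr
    intro v hv
    simp only [Set.mem_setOf_eq, Multiset.mem_map] at hv
    obtain ⟨i, -, rfl⟩ := hv
    by_cases hia : i = a
    · subst hia; exact hmem.1
    by_cases hib : i = b
    · subst hib; exact hmem.2
    · exact Submodule.subset_span ⟨i, by simp [hia, hib], rfl⟩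

end Aux

/-- A `1`-stable finite multiset (given as a finite family `p : ι → V`) is `2`-stable
if and only if no two distinct elements of it are equivalent. -/
theorem stmt_7 {F V ι : Type*} [Field F] [AddCommGroup V] [Module F V] [Fintype ι]
    (p : ι → V) (h1 : QStable F 1 (Multiset.map p Finset.univ.val)) :
    QStable F 2 (Multiset.map p Finset.univ.val) ↔
      ∀ a b : ι, a ≠ b → ¬ LinEquivRel F p a b := by
  classical
  constructor
  · intro h2 a b hab hequiv
    have hpairval : ({p a, p b} : Multiset V) = Multiset.map p ({a, b} : Finset ι).val := by
      rw [Finset.insert_val_of_notMem (by simpa using hab)]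
      simp
    have hS : ({p a, p b} : Multiset V) ≤ Multiset.map p Finset.univ.val := by
      rw [hpairval]
      exact Multiset.map_le_map (Finset.val_le_iff.2 (Finset.subset_univ _))
    have hstab := h2 {p a, p b} hS (by simp)
    have hset : mSpan F (Multiset.map p Finset.univ.val - {p a, p b})
        = Submodule.span F (p '' ({a, b} : Set ι)ᶜ) := by
      rw [hpairval]
      unfold mSpan
      rw [aux_mem_sub]
      simp
    have hpa : p a ∈ Submodule.span F (p '' ({a, b} : Set ι)ᶜ) := by
      rw [← hset, hstab]
      refine Submodule.subset_span ?_
      simp only [Set.mem_setOf_eq, Multiset.mem_map]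
      exact ⟨a, Finset.mem_univ a, rfl⟩
    rw [aux_mem_span_image] at hpa
    obtain ⟨c, hc, hsum⟩ := hpa
    have hca : c a = 0 := hc a (by simp)
    have hcb : c b = 0 := hc b (by simp)
    set d := Function.update c a (-1 : F) with hd
    have hdsum : ∑ i, d i • p i = 0 := by
      rw [hd, aux_sum_update, hsum, hca]
      simp
    have := hequiv d hdsum
    rw [hd] at this
    simp only [Function.update_self, Function.update_of_ne (Ne.symm hab)] at this
    have : (-1 : F) = 0 := this.mpr hcb
    norm_num at this
  · intro h S hS hcard
    rcases Nat.lt_or_ge (Multiset.card S) 2 with hlt | hge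
    · exact h1 S hS (by omega)
    · have hcard2 : Multiset.card S = 2 := le_antisymm hcard hge
      obtain ⟨v, w, rfl⟩ := Multiset.card_eq_two.mp hcard2
      have hv : v ∈ Multiset.map p Finset.univ.val := Multiset.mem_of_le hS (by simp)
      have hw : w ∈ Multiset.map p Finset.univ.val := Multiset.mem_of_le hS (by simp)
      obtain ⟨a, -, rfl⟩ := Multiset.mem_map.mp hv
      by_cases hvw : w = p a
      · subst hvw
        have hcount : 2 ≤ Multiset.count (p a) (Multiset.map p Finset.univ.val) := by
          have := Multiset.le_iff_count.mp hS (p a)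
          simpa using this
        rw [Multiset.count_map] at hcount
        have hcount' : 1 < (Finset.univ.filter (fun i => p a = p i)).card := by
          have hval : Multiset.card (Multiset.filter (fun i => p a = p i) Finset.univ.val)
              = (Finset.univ.filter (fun i => p a = p i)).card := by
            simp [Finset.card, Finset.filter]
          omega
        obtain ⟨x, hx, y, hy, hxy⟩ := Finset.one_lt_card.mp hcount'
        simp only [Finset.mem_filter, Finset.mem_univ, true_and] at hx hy
        have hSeq : ({p a, p a} : Multiset V) = {p x, p y} := by rw [← hx, ← hy]
        rw [hSeq]
        exact aux_pair p h1 hxy (h x y hxy)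
      · obtain ⟨b, -, rfl⟩ := Multiset.mem_map.mp hw
        have hab : a ≠ b := fun hEq => hvw (by rw [hEq])
        exact aux_pair p h1 hab (h a b hab)
end

section
/- Let P be a 1-stable finite multiset of vectors and N an equivalence class of P (for the relation: a ~ b iff every linear relation among elements of P has coefficients at a and b simultaneously zero or nonzero). Then there exists a nontrivial linear combination Σ_{v∈N} c_v v lying in the span of P \ N with all coefficients c_v nonzero, and such a combination is unique up to a scalar multiple. -/
open scoped Classical

private lemma mem_span_image_exists {F V ι : Type*} [Field F] [AddCommGroup V] [Module F V]
    [Fintype ι] (p : ι → V) (s : Set ι) {x : V} (hx : x ∈ Submodule.span F (p '' s)) :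
    ∃ e : ι → F, (∀ i, i ∉ s → e i = 0) ∧ ∑ i, e i • p i = x := by
  rw [Finsupp.mem_span_image_iff_linearCombination] at hx
  obtain ⟨l, hl, hlx⟩ := hx
  refine ⟨l, fun i hi => ?_, ?_⟩
  · by_contra h
    exact hi (hl (Finsupp.mem_support_iff.mpr h))
  · rw [← hlx, Finsupp.linearCombination_apply, Finsupp.sum_fintype]
    intro i; simp

/-- For a `1`-stable finite multiset of vectors (given as a family `p : ι → V`) and an
equivalence class `N`, there is a nontrivial linear combination of the vectors of `N`,
with all coefficients nonzero, lying in the span of the remaining vectors; moreover such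
a combination is unique up to a (nonzero) scalar multiple. -/
theorem stmt_9 {F V ι : Type*} [Field F] [AddCommGroup V] [Module F V] [Fintype ι]
    (p : ι → V) (h1 : QStable F 1 (Multiset.map p Finset.univ.val))
    (N : Set ι) (hN : ∃ a, N = {b | LinEquivRel F p a b}) :
    ∃ c : ι → F, (∀ a, a ∉ N → c a = 0) ∧ (∀ a ∈ N, c a ≠ 0) ∧
      (∑ i, c i • p i) ∈ Submodule.span F (p '' Nᶜ) ∧
      ∀ c' : ι → F, (∀ a, a ∉ N → c' a = 0) → (∃ a ∈ N, c' a ≠ 0) →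
        (∑ i, c' i • p i) ∈ Submodule.span F (p '' Nᶜ) →
        ∃ t : F, t ≠ 0 ∧ ∀ a, c' a = t * c a := by
  obtain ⟨a, rfl⟩ := hN
  have haN : a ∈ {b | LinEquivRel F p a b} := fun c _ => Iff.rfl
  have hmem : a ∈ (Finset.univ : Finset ι).val := Finset.mem_univ a
  -- Step 1: there is a linear relation with nonzero coefficient at `a`.
  have key : (Multiset.map p Finset.univ.val) - {p a}
      = Multiset.map p (Finset.univ.val.erase a) := by
    rw [Multiset.sub_singleton]
    conv_lhs => rw [← Multiset.cons_erase hmem, Multiset.map_cons, Multiset.erase_cons_head]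
  have hspan : p a ∈ Submodule.span F (p '' {a}ᶜ) := by
    have h1' := h1 {p a} (Multiset.singleton_le.mpr (Multiset.mem_map_of_mem p hmem)) (by simp)
    have hpa : p a ∈ mSpan F (Multiset.map p Finset.univ.val) :=
      Submodule.subset_span (Multiset.mem_map_of_mem p hmem)
    rw [← h1'] at hpa
    unfold mSpan at hpa
    rw [key] at hpa
    refine Submodule.span_mono ?_ hpa
    rintro x hx
    obtain ⟨j, hj, rfl⟩ := Multiset.mem_map.mp hx
    exact ⟨j, ((Multiset.Nodup.mem_erase_iff Finset.univ.nodup).mp hj).1, rfl⟩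
  obtain ⟨e, he0, hesum⟩ := mem_span_image_exists p {a}ᶜ hspan
  set d : ι → F := fun i => e i - (if i = a then 1 else 0) with hd
  have hdrel : ∑ i, d i • p i = 0 := by
    simp only [hd, sub_smul, Finset.sum_sub_distrib, hesum, ite_smul, one_smul, zero_smul,
      Finset.sum_ite_eq', Finset.mem_univ, if_true, sub_self]
  have hda : d a ≠ 0 := by
    have h0 : e a = 0 := he0 a (by simp)
    simp [hd, h0]
  have hdN : ∀ b, LinEquivRel F p a b → d b ≠ 0 := by
    intro b hb hb0
    exact hda ((hb d hdrel).mpr hb0)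
  -- the candidate coefficients
  set c : ι → F := fun i => if LinEquivRel F p a i then d i else 0 with hc
  have hcz : ∀ b, b ∉ {b | LinEquivRel F p a b} → c b = 0 := fun b hb => if_neg hb
  have hcn : ∀ b ∈ {b | LinEquivRel F p a b}, c b ≠ 0 := by
    intro b hb
    intro h
    apply hdN b hb
    simp only [hc] at h
    rwa [if_pos (show LinEquivRel F p a b from hb)] at h
  have hsum3 : (∑ i, c i • p i)
      ∈ Submodule.span F (p '' {b | LinEquivRel F p a b}ᶜ) := by
    have hadd : ∑ i, c i • p i + ∑ i, (if LinEquivRel F p a i then 0 else d i) • p i = 0 := by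
      rw [← Finset.sum_add_distrib, ← hdrel]
      refine Finset.sum_congr rfl fun i _ => ?_
      rw [← add_smul]
      by_cases h : LinEquivRel F p a i <;> simp [hc, h]
    rw [eq_neg_of_add_eq_zero_left hadd]
    refine Submodule.neg_mem _ (Submodule.sum_mem _ fun i _ => ?_)
    by_cases h : LinEquivRel F p a i
    · simp [h]
    · rw [if_neg h]
      exact Submodule.smul_mem _ _ (Submodule.subset_span ⟨i, h, rfl⟩)
  refine ⟨c, hcz, hcn, hsum3, ?_⟩
  -- uniqueness up to scalar
  rintro c' hc'0 ⟨b₀, hb₀N, hb₀⟩ hc'span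
  obtain ⟨e', he'0, he'sum⟩ := mem_span_image_exists p _ hc'span
  obtain ⟨f, hf0, hfsum⟩ := mem_span_image_exists p _ hsum3
  have he'N : ∀ i, LinEquivRel F p a i → e' i = 0 := fun i hi => he'0 i (by simpa using hi)
  have hfN : ∀ i, LinEquivRel F p a i → f i = 0 := fun i hi => hf0 i (by simpa using hi)
  have hr' : ∑ i, (c' i - e' i) • p i = 0 := by
    simp only [sub_smul, Finset.sum_sub_distrib, he'sum, sub_self]
  have hr : ∑ i, (c i - f i) • p i = 0 := by
    simp only [sub_smul, Finset.sum_sub_distrib, hfsum, sub_self]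
  have hc'a : c' a ≠ 0 := by
    have hiff := hb₀N (fun i => c' i - e' i) hr'
    intro h0
    have h2 : c' b₀ - e' b₀ = 0 :=
      hiff.mp (show c' a - e' a = 0 by rw [h0, he'N a haN, sub_zero])
    rw [he'N b₀ hb₀N, sub_zero] at h2
    exact hb₀ h2
  have hca : c a ≠ 0 := hcn a haN
  refine ⟨c' a / c a, div_ne_zero hc'a hca, ?_⟩
  intro b
  by_cases hb : LinEquivRel F p a b
  · -- combine the two relations
    have hg : ∑ i, (c a * (c' i - e' i) - c' a * (c i - f i)) • p i = 0 := by
      simp only [sub_smul, Finset.sum_sub_distrib, mul_smul, ← Finset.smul_sum, he'sum,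
        hfsum, sub_self, smul_zero]
    have hga : c a * (c' a - e' a) - c' a * (c a - f a) = 0 := by
      rw [he'N a haN, hfN a haN, sub_zero, sub_zero]; ring
    have hgb : c a * (c' b - e' b) - c' a * (c b - f b) = 0 :=
      (hb _ hg).mp hga
    rw [he'N b hb, hfN b hb, sub_zero, sub_zero] at hgb
    rw [div_mul_eq_mul_div, eq_div_iff hca]
    linear_combination hgb
  · rw [hc'0 b hb, hcz b hb, mul_zero]
end

section
/- Let g be an element of a compact group G ⊆ O(V) whose identity component G⁰ is a torus, take v ∈ V with finite stabilizer G_v containing g, and let N_v = (g·v)^⊥. Then dim((E − g)N_v) = rk(E − g|_V) − rk(E − Ad(g)), where E is the identity. In particular, g acts on N_v as a pseudoreflection (fixed-point subspace of codimension 2) or identically if and only if rk(E − g|_V) − rk(E − Ad(g)) ∈ {0, 2}. -/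
/-- Let `g` be a linear isometry of a real finite-dimensional inner product space `V`
fixing a vector `v` and leaving invariant the tangent space `T` to the orbit of `v`
(on which it acts as `Ad g`), and let `N = Tᗮ`. Then
`dim((E − g) N) = rk(E − g) − rk(E − Ad g)`; in particular `g` acts on `N` as a
pseudoreflection (fixed subspace of codimension `2`) or identically if and only if
`rk(E − g) − rk(E − Ad g) ∈ {0, 2}`. -/
theorem stmt_12 {V : Type*} [NormedAddCommGroup V] [InnerProductSpace ℝ V]
    [FiniteDimensional ℝ V] (g : V ≃ₗᵢ[ℝ] V) (v : V) (hv : g v = v)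
    (T : Submodule ℝ V) (hT : ∀ x ∈ T, g x ∈ T) :
    let N : Submodule ℝ V := Submodule.orthogonal T
    let g' : V →ₗ[ℝ] V := (g.toLinearEquiv : V →ₗ[ℝ] V)
    (Module.finrank ℝ (Submodule.map (LinearMap.id - g') N) =
      Module.finrank ℝ (LinearMap.range (LinearMap.id - g')) -
        Module.finrank ℝ (Submodule.map (LinearMap.id - g') T)) ∧
    ((Module.finrank ℝ N -
        Module.finrank ℝ ↥(N ⊓ LinearMap.ker (LinearMap.id - g')) ∈ ({0, 2} : Set ℕ)) ↔
      (Module.finrank ℝ (LinearMap.range (LinearMap.id - g')) -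
        Module.finrank ℝ (Submodule.map (LinearMap.id - g') T) ∈ ({0, 2} : Set ℕ))) := by
  intro N g'
  set f : V →ₗ[ℝ] V := LinearMap.id - g' with hf
  -- g maps T onto T
  have hgT : Submodule.map g' T = T := by
    apply Submodule.eq_of_le_of_finrank_le
    · rintro _ ⟨x, hx, rfl⟩; exact hT x hx
    · exact le_of_eq (LinearEquiv.finrank_map_eq g.toLinearEquiv T).symm
  -- g maps N into N
  have hgN : ∀ x ∈ N, g x ∈ N := by
    intro x hx u hu
    rw [← hgT] at hu
    obtain ⟨s, hs, rfl⟩ := hu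
    have : inner ℝ (g s) ((g : V ≃ₗᵢ[ℝ] V) x) = (inner ℝ s x : ℝ) :=
      g.inner_map_map s x
    rw [show g' s = g s from rfl, this]
    exact hx s hs
  -- f maps T into T and N into N
  have hfT : Submodule.map f T ≤ T := by
    rintro _ ⟨x, hx, rfl⟩
    exact T.sub_mem hx (hT x hx)
  have hfN : Submodule.map f N ≤ N := by
    rintro _ ⟨x, hx, rfl⟩
    exact N.sub_mem hx (hgN x hx)
  -- range f = f T ⊔ f N
  have hrange : LinearMap.range f = Submodule.map f T ⊔ Submodule.map f N := by
    rw [LinearMap.range_eq_map f, ← Submodule.sup_orthogonal_of_hasOrthogonalProjection (K := T),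
      Submodule.map_sup]
  have hdisj : Submodule.map f T ⊓ Submodule.map f N = ⊥ := by
    rw [← le_bot_iff, ← T.inf_orthogonal_eq_bot]
    exact inf_le_inf hfT hfN
  have hsum : Module.finrank ℝ (LinearMap.range f) =
      Module.finrank ℝ (Submodule.map f T) + Module.finrank ℝ (Submodule.map f N) := by
    have := Submodule.finrank_sup_add_finrank_inf_eq (Submodule.map f T) (Submodule.map f N)
    rw [hdisj, finrank_bot, ← hrange] at this
    omega
  -- rank-nullity for f restricted to N
  have hrn : Module.finrank ℝ (Submodule.map f N) +
      Module.finrank ℝ ↥(N ⊓ LinearMap.ker f) = Module.finrank ℝ N := by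
    have h1 := LinearMap.finrank_range_add_finrank_ker (f.domRestrict N)
    rw [LinearMap.range_domRestrict, LinearMap.ker_domRestrict] at h1
    have h2 : Module.finrank ℝ ↥(N ⊓ LinearMap.ker f) =
        Module.finrank ℝ (Submodule.comap N.subtype (LinearMap.ker f)) := by
      rw [← Submodule.map_comap_subtype, Submodule.finrank_map_subtype_eq]
    rw [h2]
    exact h1
  refine ⟨by omega, ?_⟩
  have : Module.finrank ℝ N - Module.finrank ℝ ↥(N ⊓ LinearMap.ker f) =
      Module.finrank ℝ (LinearMap.range f) - Module.finrank ℝ (Submodule.map f T) := by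
    omega
  rw [this]
end

section
/- Let H be the subgroup of the torus 𝕋ⁿ ⊆ GL_n(ℂ) (n ≥ 2) consisting of all diagonal unitary operators diag(λ₁,…,λₙ) with |λᵢ| = 1 and λ₁^{a₁} ⋯ λₙ^{aₙ} = 1, where a₁,…,aₙ are positive integers. Then two vectors z, z′ ∈ ℂⁿ lie in the same H-orbit if and only if |zᵢ| = |z′ᵢ| for all i and z₁^{a₁}⋯zₙ^{aₙ} = z′₁^{a₁}⋯z′ₙ^{a′ₙ} (the latter condition being automatic if some coordinate vanishes). -/
/-- Orbits of the subtorus `H = {diag(λ₁,…,λₙ) : |λᵢ| = 1, λ₁^{a₁}⋯λₙ^{aₙ} = 1}` acting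
diagonally on `ℂⁿ` (`n ≥ 2`, `aᵢ` positive integers): two vectors `z`, `z'` lie in the
same `H`-orbit iff `|zᵢ| = |z'ᵢ|` for all `i` and `∏ zᵢ^{aᵢ} = ∏ z'ᵢ^{aᵢ}`. -/
theorem stmt_13 (n : ℕ) (hn : 2 ≤ n) (a : Fin n → ℕ) (ha : ∀ i, 0 < a i)
    (z z' : Fin n → ℂ) :
    (∃ l : Fin n → ℂ, (∀ i, ‖l i‖ = 1) ∧ (∏ i, l i ^ a i = 1) ∧ ∀ i, z' i = l i * z i) ↔
      ((∀ i, ‖z i‖ = ‖z' i‖) ∧ ∏ i, z i ^ a i = ∏ i, z' i ^ a i) := by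
  constructor
  · rintro ⟨l, hl1, hlp, hlz⟩
    constructor
    · intro i
      rw [hlz i, norm_mul, hl1 i, one_mul]
    · calc ∏ i, z i ^ a i = (∏ i, l i ^ a i) * ∏ i, z i ^ a i := by rw [hlp, one_mul]
        _ = ∏ i, (l i * z i) ^ a i := by rw [← Finset.prod_mul_distrib]; simp [mul_pow]
        _ = ∏ i, z' i ^ a i := by simp_rw [← hlz]
  · rintro ⟨hnorm, hprod⟩
    by_cases hz : ∀ i, z i ≠ 0
    · refine ⟨fun i => z' i / z i, ?_, ?_, ?_⟩
      · intro i
        rw [norm_div, ← hnorm i, div_self (by simpa using (hz i))]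
      · have : ∏ i, (z' i / z i) ^ a i = (∏ i, z' i ^ a i) / ∏ i, z i ^ a i := by
          simp_rw [div_pow]; exact Finset.prod_div_distrib _ _
        rw [this, ← hprod, div_self]
        exact Finset.prod_ne_zero_iff.mpr fun i _ => pow_ne_zero _ (hz i)
      · intro i
        rw [div_mul_cancel₀ _ (hz i)]
    · push_neg at hz
      obtain ⟨j, hj⟩ := hz
      set m : Fin n → ℂ := fun i => if z i = 0 then 1 else z' i / z i with hm
      have hm1 : ∀ i, ‖m i‖ = 1 := by
        intro i
        by_cases h : z i = 0
        · simp [hm, h]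
        · simp only [hm, h, if_false, norm_div, ← hnorm i]
          exact div_self (by simpa using h)
      have hmz : ∀ i, z' i = m i * z i := by
        intro i
        by_cases h : z i = 0
        · have : ‖z' i‖ = 0 := by rw [← hnorm i, h, norm_zero]
          simp_all
        · simp [hm, h, div_mul_cancel₀ _ h]
      set c : ℂ := ∏ i, m i ^ a i with hc
      have hcne : c ≠ 0 := by
        refine Finset.prod_ne_zero_iff.mpr fun i _ => pow_ne_zero _ ?_
        intro h0
        have := hm1 i
        rw [h0, norm_zero] at this
        norm_num at this
      obtain ⟨r, hr⟩ : ∃ r : ℂ, r ^ a j = c⁻¹ :=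
        IsAlgClosed.exists_pow_nat_eq c⁻¹ (ha j)
      have hcn : ‖c‖₊ = 1 := by
        have : ‖c‖ = 1 := by
          rw [hc, show ‖∏ i, m i ^ a i‖ = ∏ i, ‖m i‖ ^ a i from by
            rw [norm_prod]; simp [norm_pow]]
          simp [hm1]
        ext; simpa using this
      have hrnorm : ‖r‖ = 1 := by
        have h1 : ‖r‖₊ ^ a j = 1 := by
          rw [← nnnorm_pow, hr, nnnorm_inv, hcn, inv_one]
        have h2 : ‖r‖₊ = 1 := (pow_eq_one_iff_of_nonneg zero_le' (ha j).ne').mp h1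
        simpa using congrArg NNReal.toReal h2
      refine ⟨Function.update m j r, ?_, ?_, ?_⟩
      · intro i
        by_cases h : i = j
        · subst h; simp [hrnorm]
        · simp [Function.update_of_ne h, hm1]
      · have hmj : m j ^ a j = 1 := by simp [hm, hj]
        have hce : (∏ i ∈ Finset.univ.erase j, m i ^ a i) = c := by
          rw [hc, ← Finset.prod_erase_mul _ _ (Finset.mem_univ j), hmj, mul_one]
        have hsplit : ∏ i, Function.update m j r i ^ a i =
            (∏ i ∈ Finset.univ.erase j, m i ^ a i) * r ^ a j := by
          rw [← Finset.prod_erase_mul _ _ (Finset.mem_univ j), Function.update_self]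
          congr 1
          exact Finset.prod_congr rfl fun i hi => by
            rw [Function.update_of_ne (Finset.ne_of_mem_erase hi)]
        rw [hsplit, hce, hr, mul_inv_cancel₀ hcne]
      · intro i
        by_cases h : i = j
        · subst h
          have h0 : ‖z' i‖ = 0 := by rw [← hnorm i, hj, norm_zero]
          simp [norm_eq_zero.mp h0, hj]
        · rw [Function.update_of_ne h]; exact hmz i
end

section
/- Let H be the subgroup of diagonal unitary operators diag(λ₁,…,λₙ) on ℂⁿ (n ≥ 2) with λ₁^{a₁}⋯λₙ^{aₙ} = 1 for fixed positive integers aᵢ, and suppose the n one-dimensional complex coordinate representations of H are pairwise non-isomorphic as real representations. If g ∈ U(n)-normalizer of H is a composition g = g₁∘g₂∘g₃ where g₁ permutes coordinates by a permutation σ, g₂ conjugates some subset of the coordinates, and g₃ multiplies coordinate i by a unit complex number νᵢ, then a_{σ(i)} = a_i for all i, and g₂ is either the identity or conjugates all coordinates. -/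
open scoped Classical

/-- Membership in the subtorus `H ⊆ 𝕋ⁿ` defined by the character with exponents `a`. -/
def memH {n : ℕ} (a : Fin n → ℕ) (l : Fin n → ℂ) : Prop :=
  (∀ i, ‖l i‖ = 1) ∧ ∏ i, l i ^ a i = 1

/-- The diagonal operator `diag(l₁,…,lₙ)` on `ℂⁿ`. -/
def Dop {n : ℕ} (l : Fin n → ℂ) (z : Fin n → ℂ) : Fin n → ℂ := fun i => l i * z i

/-- On the unit circle, conjugation is inversion. -/
lemma conj_eq_inv_of_norm_one {l : ℂ} (hl : ‖l‖ = 1) : (starRingEnd ℂ) l = l⁻¹ := by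
  have h : (starRingEnd ℂ) l * l = 1 := by
    rw [mul_comm, Complex.mul_conj, Complex.normSq_eq_norm_sq]
    rw [hl]
    norm_num
  exact eq_inv_of_mul_eq_one_left h

/-- If a character with integer exponents `c` vanishes on all of `H`, then
`c` is proportional to `a`. -/
lemma char_proportional {n : ℕ} (a : Fin n → ℕ) (c : Fin n → ℤ)
    (hc : ∀ l : Fin n → ℂ, memH a l → ∏ x, l x ^ c x = 1)
    (j k : Fin n) : (a k : ℤ) * c j = (a j : ℤ) * c k := by
  rcases eq_or_ne j k with rfl | hjk
  · rfl
  by_contra hne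
  set d : ℤ := (a k : ℤ) * c j - (a j : ℤ) * c k with hd
  have hd0 : d ≠ 0 := sub_ne_zero.mpr hne
  have hdR : ((d : ℝ)) ≠ 0 := Int.cast_ne_zero.mpr hd0
  set θ : ℝ := ((d : ℝ))⁻¹ with hθ
  set e : Fin n → ℤ := fun x => if x = j then (a k : ℤ) else if x = k then -(a j : ℤ) else 0
    with he
  set l : Fin n → ℂ := fun x => Complex.exp ((((e x : ℝ) * θ : ℝ) : ℂ) * Complex.I) with hldef
  have hsum : ∀ w : Fin n → ℤ, ∑ x, e x * w x = (a k : ℤ) * w j - (a j : ℤ) * w k := by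
    intro w
    have hpt : ∀ x, e x * w x =
        (if x = j then (a k : ℤ) * w j else 0) + (if x = k then -((a j : ℤ) * w k) else 0) := by
      intro x
      by_cases h1 : x = j
      · subst h1
        simp [he, hjk]
      · by_cases h2 : x = k
        · subst h2
          simp [he, h1]
        · simp [he, h1, h2]
    rw [Finset.sum_congr rfl (fun x _ => hpt x), Finset.sum_add_distrib,
      Finset.sum_ite_eq' Finset.univ j, Finset.sum_ite_eq' Finset.univ k]
    simp
    ring
  have hpow : ∀ (x : Fin n) (w : ℤ),
      l x ^ w = Complex.exp ((((e x * w : ℤ) : ℝ) * θ : ℝ) * Complex.I) := by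
    intro x w
    rw [hldef]
    rw [← Complex.exp_int_mul]
    congr 1
    push_cast
    ring
  have hprod : ∀ w : Fin n → ℤ,
      ∏ x, l x ^ w x =
        Complex.exp (((((a k : ℤ) * w j - (a j : ℤ) * w k : ℤ) : ℝ) * θ : ℝ) * Complex.I) := by
    intro w
    have : ∀ x ∈ Finset.univ, l x ^ w x
        = Complex.exp ((((e x * w x : ℤ) : ℝ) * θ : ℝ) * Complex.I) :=
      fun x _ => hpow x (w x)
    rw [Finset.prod_congr rfl this, ← Complex.exp_sum]
    congr 1
    rw [← hsum w]
    push_cast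
    rw [Finset.sum_mul, Finset.sum_mul]
  have hmem : memH a l := by
    constructor
    · intro x
      rw [hldef]
      simpa using Complex.norm_exp_ofReal_mul_I ((e x : ℝ) * θ)
    · have : ∏ x, l x ^ a x = ∏ x, l x ^ ((a x : ℤ)) := by
        simp [zpow_natCast]
      rw [this, hprod (fun x => (a x : ℤ))]
      have hz : ((a k : ℤ) * (a j : ℤ) - (a j : ℤ) * (a k : ℤ)) = 0 := by ring
      rw [hz]
      simp
  have hone := hc l hmem
  rw [hprod c] at hone
  have hdd : ((d : ℝ)) * θ = 1 := by
    rw [hθ]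
    field_simp
  rw [← hd] at hone
  rw [hdd] at hone
  have him := congrArg Complex.im hone
  rw [Complex.exp_ofReal_mul_I_im] at him
  have hsin : Real.sin 1 ≠ 0 := by
    have h1 : (0 : ℝ) < 1 := one_pos
    have h2 : (1 : ℝ) < Real.pi := by
      have := Real.pi_gt_three
      linarith
    exact ne_of_gt (Real.sin_pos_of_pos_of_lt_pi h1 h2)
  simp at him
  exact hsin him

/-- Suppose the coordinate representations of `H` are pairwise non-isomorphic over `ℝ`,
and `g = g₁ ∘ g₂ ∘ g₃` normalizes `H`, where `g₁` permutes coordinates by `σ`, `g₂`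
conjugates the coordinates in a set `S`, and `g₃` multiplies coordinate `i` by a unit
complex number `ν i`. Then `a (σ i) = a i` for all `i`, and `g₂` is the identity or
conjugates all coordinates. -/
theorem stmt_14 {n : ℕ} (hn : 2 ≤ n) (a : Fin n → ℕ) (ha : ∀ i, 0 < a i)
    (hiso : ∀ i j : Fin n, i ≠ j →
      (∃ l, memH a l ∧ l i ≠ l j) ∧ (∃ l, memH a l ∧ l i * l j ≠ 1))
    (σ : Equiv.Perm (Fin n)) (S : Set (Fin n)) (ν : Fin n → ℂ) (hν : ∀ i, ‖ν i‖ = 1)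
    (g : (Fin n → ℂ) → (Fin n → ℂ))
    (hg : ∀ z i, g z i = if σ i ∈ S then (starRingEnd ℂ) (ν (σ i) * z (σ i))
      else ν (σ i) * z (σ i))
    (hnorm : ∀ l, memH a l → ∃ m, memH a m ∧ ∀ z, g (Dop l z) = Dop m (g z))
    (hnorm' : ∀ m, memH a m → ∃ l, memH a l ∧ ∀ z, g (Dop l z) = Dop m (g z)) :
    (∀ i, a (σ i) = a i) ∧ (S = ∅ ∨ S = Set.univ) := by
  haveI : Nonempty (Fin n) := ⟨⟨0, by omega⟩⟩
  -- the character that must also vanish on H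
  set c : Fin n → ℤ :=
    fun j => if j ∈ S then -(a (σ.symm j) : ℤ) else (a (σ.symm j) : ℤ) with hcdef
  have hc1 : ∀ i, c (σ i) = if σ i ∈ S then -(a i : ℤ) else (a i : ℤ) := by
    intro i
    simp [hcdef]
  -- the character c vanishes on H
  have hc : ∀ l, memH a l → ∏ x, l x ^ c x = 1 := by
    intro l hl
    obtain ⟨m, hm, hez⟩ := hnorm l hl
    have hme : ∀ i, m i = if σ i ∈ S then (l (σ i))⁻¹ else l (σ i) := by
      intro i
      have h1 := congrFun (hez (fun _ => 1)) i
      simp only [Dop, hg, mul_one] at h1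
      by_cases hS : σ i ∈ S
      · simp only [hS, if_true, map_mul] at h1 ⊢
        have hν0 : (starRingEnd ℂ) (ν (σ i)) ≠ 0 := by
          simp only [ne_eq, map_eq_zero]
          intro h
          have := hν (σ i)
          rw [h] at this
          simp at this
        have : (starRingEnd ℂ) (ν (σ i)) * (starRingEnd ℂ) (l (σ i))
            = (starRingEnd ℂ) (ν (σ i)) * m i := by
          rw [h1]; ring
        have h2 := mul_left_cancel₀ hν0 this
        rw [← h2, conj_eq_inv_of_norm_one (hl.1 (σ i))]
      · simp only [hS, if_false] at h1 ⊢
        have hν0 : ν (σ i) ≠ 0 := by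
          intro h
          have := hν (σ i)
          rw [h] at this
          simp at this
        have : ν (σ i) * l (σ i) = ν (σ i) * m i := by
          rw [h1]; ring
        rw [← mul_left_cancel₀ hν0 this]
    have hterm : ∀ i, m i ^ a i = l (σ i) ^ c (σ i) := by
      intro i
      rw [hme i, hc1 i]
      by_cases hS : σ i ∈ S
      · simp only [hS, if_true]
        rw [zpow_neg, zpow_natCast, inv_pow]
      · simp only [hS, if_false, zpow_natCast]
    calc ∏ x, l x ^ c x = ∏ i, l (σ i) ^ c (σ i) :=
          (Equiv.prod_comp σ (fun x => l x ^ c x)).symm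
      _ = ∏ i, m i ^ a i := by
          exact Finset.prod_congr rfl (fun i _ => (hterm i).symm)
      _ = 1 := hm.2
  have key : ∀ j k, (a k : ℤ) * c j = (a j : ℤ) * c k := char_proportional a c hc
  -- sign analysis
  have hsign : ∀ j k, j ∈ S → k ∉ S → False := by
    intro j k hjS hkS
    have h1 : c j < 0 := by
      simp only [hcdef, hjS, if_true]
      have := ha (σ.symm j)
      omega
    have h2 : 0 < c k := by
      simp only [hcdef, hkS, if_false]
      have := ha (σ.symm k)
      omega
    have hk0 : (0 : ℤ) < (a k : ℤ) := by exact_mod_cast ha k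
    have hj0 : (0 : ℤ) < (a j : ℤ) := by exact_mod_cast ha j
    have hlt : (a k : ℤ) * c j < 0 := mul_neg_of_pos_of_neg hk0 h1
    have hgt : 0 < (a j : ℤ) * c k := mul_pos hj0 h2
    rw [key j k] at hlt
    omega
  -- magnitudes
  have hnatAbs : ∀ j, (c j).natAbs = a (σ.symm j) := by
    intro j
    by_cases hS : j ∈ S <;> simp [hcdef, hS]
  have hkey2 : ∀ j k, a k * a (σ.symm j) = a j * a (σ.symm k) := by
    intro j k
    have := congrArg Int.natAbs (key j k)
    rwa [Int.natAbs_mul, Int.natAbs_mul, Int.natAbs_natCast, Int.natAbs_natCast,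
      hnatAbs j, hnatAbs k] at this
  have hsumeq : ∑ k, a (σ.symm k) = ∑ k, a k := Equiv.sum_comp σ.symm a
  have hmono : ∀ j, a (σ.symm j) < a j → ∀ k, a (σ.symm k) < a k := by
    intro j hj k
    have h := hkey2 j k
    have : a j * a (σ.symm k) < a j * a k := by
      calc a j * a (σ.symm k) = a k * a (σ.symm j) := h.symm
        _ < a k * a j := (Nat.mul_lt_mul_left (ha k)).mpr hj
        _ = a j * a k := Nat.mul_comm _ _
    exact Nat.lt_of_mul_lt_mul_left this
  have hmono' : ∀ j, a j < a (σ.symm j) → ∀ k, a k < a (σ.symm k) := by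
    intro j hj k
    have h := hkey2 j k
    have : a j * a k < a j * a (σ.symm k) := by
      calc a j * a k = a k * a j := Nat.mul_comm _ _
        _ < a k * a (σ.symm j) := (Nat.mul_lt_mul_left (ha k)).mpr hj
        _ = a j * a (σ.symm k) := h
    exact Nat.lt_of_mul_lt_mul_left this
  have hfinal : ∀ j, a (σ.symm j) = a j := by
    intro j
    rcases Nat.lt_trichotomy (a (σ.symm j)) (a j) with hlt | heq | hgt
    · exfalso
      have hsum := Finset.sum_lt_sum_of_nonempty Finset.univ_nonempty
        (fun k _ => hmono j hlt k)
      omega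
    · exact heq
    · exfalso
      have hsum := Finset.sum_lt_sum_of_nonempty Finset.univ_nonempty
        (fun k _ => hmono' j hgt k)
      omega
  constructor
  · intro i
    have := hfinal (σ i)
    rw [Equiv.symm_apply_apply] at this
    exact this.symm
  · by_cases hS : S = ∅
    · exact Or.inl hS
    · right
      obtain ⟨j, hj⟩ := Set.nonempty_iff_ne_empty.mpr hS
      rw [Set.eq_univ_iff_forall]
      intro k
      by_contra hk
      exact hsign j k hj hk
end

section
/- Let H ⊆ GL(V) be the group of right multiplications by unit complex numbers on V = ℍ (the quaternions, viewed as a 2-dimensional complex vector space via left multiplication by i). Then the map π: ℍ → ℍ, v ↦ v i v̄ (quaternionic conjugation) has image equal to the purely imaginary quaternions ⟨i, j, k⟩ ≅ ℝ³, and π(v₁) = π(v₂) if and only if v₁ = v₂ z for some complex number z with |z| = 1. Consequently the orbit space V/H is homeomorphic to ℝ³. -/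
/-- The quaternion `i`. -/
def qi : Quaternion ℝ := ⟨0, 1, 0, 0⟩

/-- The Hopf-type map `v ↦ v i v̄` on the quaternions. -/
noncomputable def hopf (v : Quaternion ℝ) : Quaternion ℝ := v * qi * star v

@[simp] lemma qi_re : qi.re = 0 := rfl
@[simp] lemma qi_imI : qi.imI = 1 := rfl
@[simp] lemma qi_imJ : qi.imJ = 0 := rfl
@[simp] lemma qi_imK : qi.imK = 0 := rfl

/-- The quaternion `j`. -/
def qj : Quaternion ℝ := ⟨0, 0, 1, 0⟩

@[simp] lemma qj_re : qj.re = 0 := rfl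
@[simp] lemma qj_imI : qj.imI = 0 := rfl
@[simp] lemma qj_imJ : qj.imJ = 1 := rfl
@[simp] lemma qj_imK : qj.imK = 0 := rfl

lemma hopf_re (v : Quaternion ℝ) : (hopf v).re = 0 := by
  simp [hopf, Quaternion.re_mul, Quaternion.imI_mul, Quaternion.imJ_mul, Quaternion.imK_mul]
  ring

lemma norm_qi : ‖qi‖ = 1 := by
  have h : ‖qi‖ ^ 2 = 1 := by
    rw [sq, ← Quaternion.normSq_eq_norm_mul_self]
    simp [Quaternion.normSq_def']
  nlinarith [norm_nonneg qi]

lemma norm_hopf (v : Quaternion ℝ) : ‖hopf v‖ = ‖v‖ ^ 2 := by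
  rw [hopf, norm_mul, norm_mul, norm_qi, Quaternion.norm_star]; ring

lemma star_of_im (q : Quaternion ℝ) (h : q.re = 0) : star q = -q := by
  ext <;> simp [h]

lemma norm_sq_im (q : Quaternion ℝ) (h : q.re = 0) :
    ‖q‖ ^ 2 = q.imI^2 + q.imJ^2 + q.imK^2 := by
  rw [sq, ← Quaternion.normSq_eq_norm_mul_self, Quaternion.normSq_def', h]; ring

lemma sq_of_im (q : Quaternion ℝ) (h : q.re = 0) : q * q = ((-(‖q‖^2) : ℝ) : Quaternion ℝ) := by
  have h1 : q * q = -(star q * q) := by rw [star_of_im q h, neg_mul, neg_neg]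
  have h2 : Quaternion.normSq q = ‖q‖^2 := by rw [Quaternion.normSq_eq_norm_mul_self, sq]
  rw [h1, Quaternion.star_mul_self, h2]
  push_cast
  ring_nf

lemma hopf_smul (c : ℝ) (w : Quaternion ℝ) : hopf (c • w) = (c^2) • hopf w := by
  simp [hopf, smul_mul_assoc, mul_smul_comm, smul_smul, sq]

lemma hopf_surj_aux (q : Quaternion ℝ) (h : q.re = 0) : ∃ v, hopf v = q := by
  rcases eq_or_ne q 0 with rfl | hq0
  · exact ⟨0, by simp [hopf]⟩
  set r := ‖q‖ with hr
  have hrpos : 0 < r := norm_pos_iff.2 hq0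
  have hn : r ^ 2 = q.imI^2 + q.imJ^2 + q.imK^2 := norm_sq_im q h
  set w := q + r • qi with hw
  have hwre : w.re = 0 := by simp [hw, h]
  rcases eq_or_ne w 0 with hw0 | hw0
  · have hq : q = -(r • qi) := by rwa [hw, add_eq_zero_iff_eq_neg] at hw0
    refine ⟨Real.sqrt r • qj, ?_⟩
    rw [hopf_smul, Real.sq_sqrt hrpos.le, hq]
    have : hopf qj = -qi := by
      ext <;> simp [hopf, Quaternion.re_mul, Quaternion.imI_mul, Quaternion.imJ_mul, Quaternion.imK_mul]
    rw [this]; simp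
  · have hwi' : q * w = r • (w * qi) := by
      ext <;>
        simp [hw, Quaternion.re_mul, Quaternion.imI_mul, Quaternion.imJ_mul,
          Quaternion.imK_mul, h] <;>
      nlinarith [hn]
    have hwi : w * qi = r⁻¹ • (q * w) := by
      rw [hwi', smul_smul, inv_mul_cancel₀ hrpos.ne', one_smul]
    have hww : w * w = ((-(‖w‖^2) : ℝ) : Quaternion ℝ) := sq_of_im w hwre
    have hhw : hopf w = (‖w‖^2 / r) • q := by
      rw [hopf, star_of_im w hwre, hwi, mul_neg, smul_mul_assoc, mul_assoc, hww,
        Quaternion.mul_coe_eq_smul, smul_smul, mul_neg, neg_smul, neg_neg, div_eq_inv_mul]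
    refine ⟨(Real.sqrt r / ‖w‖) • w, ?_⟩
    rw [hopf_smul, hhw, smul_smul, div_pow, Real.sq_sqrt hrpos.le,
      show r / ‖w‖^2 * (‖w‖^2/r) = 1 by
        rw [div_mul_div_comm, mul_comm r,
          div_self (mul_ne_zero (pow_ne_zero _ (norm_ne_zero_iff.2 hw0)) hrpos.ne')],
      one_smul]

lemma hopf_iff (v₁ v₂ : Quaternion ℝ) : hopf v₁ = hopf v₂ ↔
    ∃ z : Quaternion ℝ, z.imJ = 0 ∧ z.imK = 0 ∧ ‖z‖ = 1 ∧ v₁ = v₂ * z := by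
  constructor
  · intro hv
    rcases eq_or_ne v₂ 0 with rfl | h2
    · have h1 : ‖v₁‖ ^ 2 = 0 := by rw [← norm_hopf, hv, hopf]; simp
      have hv10 : v₁ = 0 := by
        rw [pow_eq_zero_iff (by norm_num), norm_eq_zero] at h1; exact h1
      exact ⟨1, by simp [Quaternion.imJ_one], by simp [Quaternion.imK_one], by simp, by simp [hv10]⟩
    · set z := v₂⁻¹ * v₁ with hzdef
      have hv1 : v₁ = v₂ * z := by rw [hzdef, ← mul_assoc, mul_inv_cancel₀ h2, one_mul]
      have hnorm : ‖v₁‖ = ‖v₂‖ := by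
        have h3 := norm_hopf v₁
        rw [hv, norm_hopf] at h3
        nlinarith [norm_nonneg v₁, norm_nonneg v₂]
      have hzn : ‖z‖ = 1 := by
        rw [hzdef, norm_mul, norm_inv, hnorm, inv_mul_cancel₀ (norm_ne_zero_iff.2 h2)]
      have hz0 : z ≠ 0 := by intro h0; rw [h0, norm_zero] at hzn; norm_num at hzn
      have hns : z * star z = 1 := by
        rw [Quaternion.self_mul_star]
        have : Quaternion.normSq z = 1 := by
          rw [Quaternion.normSq_eq_norm_mul_self, hzn, one_mul]
        rw [this]; exact_mod_cast rfl
      have hstar : star z = z⁻¹ := eq_inv_of_mul_eq_one_right hns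
      have hzq : z * qi * star z = qi := by
        have h6 := hv
        rw [hopf, hopf, hv1, star_mul] at h6
        have hkey : v₂ * (z * qi * star z) * star v₂ = v₂ * qi * star v₂ := by
          rw [← h6]; noncomm_ring
        have h4 := mul_right_cancel₀ (star_ne_zero.2 h2) hkey
        exact mul_left_cancel₀ h2 h4
      have hcomm : z * qi = qi * z := by
        rw [hstar] at hzq
        rwa [mul_inv_eq_iff_eq_mul₀ hz0] at hzq
      refine ⟨z, ?_, ?_, hzn, hv1⟩
      · have h5 := congrArg QuaternionAlgebra.imK hcomm
        simp [Quaternion.imK_mul] at h5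
        linarith
      · have h5 := congrArg QuaternionAlgebra.imJ hcomm
        simp [Quaternion.imJ_mul] at h5
        linarith
  · rintro ⟨z, hJ, hK, hz, rfl⟩
    have hcomm : z * qi = qi * z := by
      ext <;> simp [Quaternion.re_mul, Quaternion.imI_mul, Quaternion.imJ_mul,
        Quaternion.imK_mul, hJ, hK]
    have hns : z * star z = 1 := by
      rw [Quaternion.self_mul_star]
      have : Quaternion.normSq z = 1 := by
        rw [Quaternion.normSq_eq_norm_mul_self, hz, one_mul]
      rw [this]; exact_mod_cast rfl
    have hkey : z * qi * star z = qi := by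
      rw [hcomm, mul_assoc, hns, mul_one]
    rw [hopf, hopf, star_mul,
      show v₂ * z * qi * (star z * star v₂) = v₂ * (z * qi * star z) * star v₂ by noncomm_ring,
      hkey]

/-- `hopf` composed with the identification of the imaginary part with `ℝ³`. -/
noncomputable def hopfE (v : Quaternion ℝ) : EuclideanSpace ℝ (Fin 3) :=
  (WithLp.equiv 2 (Fin 3 → ℝ)).symm ![(hopf v).imI, (hopf v).imJ, (hopf v).imK]

lemma continuous_hopf : Continuous hopf := by
  unfold hopf
  fun_prop

lemma continuous_hopfE : Continuous hopfE := by
  unfold hopfE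
  apply Continuous.comp (PiLp.continuous_toLp 2 (fun _ : Fin 3 => ℝ))
  refine continuous_pi fun i => ?_
  fin_cases i <;> simp
  · exact Quaternion.continuous_imI.comp continuous_hopf
  · exact Quaternion.continuous_imJ.comp continuous_hopf
  · exact Quaternion.continuous_imK.comp continuous_hopf

lemma norm_hopfE (v : Quaternion ℝ) : ‖hopfE v‖ = ‖v‖ ^ 2 := by
  have h1 : ‖hopfE v‖ ^ 2 = ‖hopf v‖ ^ 2 := by
    rw [EuclideanSpace.norm_eq]
    rw [Real.sq_sqrt (by positivity)]
    rw [norm_sq_im _ (hopf_re v)]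
    simp [hopfE, Fin.sum_univ_three]
  have := norm_hopf v
  nlinarith [norm_nonneg (hopfE v), norm_nonneg v, norm_nonneg (hopf v)]

lemma hopfE_surj : Function.Surjective hopfE := by
  intro y
  obtain ⟨v, hv⟩ := hopf_surj_aux ⟨0, y 0, y 1, y 2⟩ rfl
  refine ⟨v, ?_⟩
  ext i
  fin_cases i <;> simp [hopfE, hv]

lemma ker_eq : Setoid.ker hopf = Setoid.ker hopfE := by
  ext x y
  rw [Setoid.ker_def, Setoid.ker_def]
  constructor
  · intro h; simp only [hopfE, h]
  · intro h
    have h0 := congrArg (fun p => p 0) h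
    have h1 := congrArg (fun p => p 1) h
    have h2 := congrArg (fun p => p 2) h
    simp [hopfE] at h0 h1 h2
    ext
    · rw [hopf_re, hopf_re]
    · exact h0
    · exact h1
    · exact h2

lemma isProper_hopfE : IsProperMap hopfE := by
  rw [isProperMap_iff_isCompact_preimage]
  refine ⟨continuous_hopfE, fun K hK => ?_⟩
  rw [Metric.isCompact_iff_isClosed_bounded] at hK ⊢
  obtain ⟨hKc, hKb⟩ := hK
  refine ⟨hKc.preimage continuous_hopfE, ?_⟩
  obtain ⟨C, hC⟩ := hKb.subset_closedBall 0
  rw [Metric.isBounded_iff_subset_closedBall 0]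
  refine ⟨Real.sqrt C, fun v hv => ?_⟩
  have h1 : ‖hopfE v‖ ≤ C := by
    have := hC hv
    simpa [Metric.mem_closedBall, dist_zero_right] using this
  rw [norm_hopfE] at h1
  simp only [Metric.mem_closedBall, dist_zero_right]
  have h2 : 0 ≤ ‖v‖ := norm_nonneg v
  nlinarith [Real.sq_sqrt (le_trans (by positivity) h1), Real.sqrt_nonneg C]

lemma quot_homeo : Nonempty ((Quotient (Setoid.ker hopfE)) ≃ₜ EuclideanSpace ℝ (Fin 3)) := by
  have hq : Topology.IsQuotientMap hopfE :=
    isProper_hopfE.isClosedMap.isQuotientMap continuous_hopfE hopfE_surj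
  let e := Setoid.quotientKerEquivOfSurjective hopfE hopfE_surj
  have hsymm : (e.symm : EuclideanSpace ℝ (Fin 3) → Quotient (Setoid.ker hopfE)) ∘ hopfE
      = Quotient.mk'' := by
    funext x
    apply e.injective
    simp only [Function.comp_apply, Equiv.apply_symm_apply]
    rfl
  refine ⟨⟨e, ?_, ?_⟩⟩
  · exact continuous_quot_lift _ continuous_hopfE
  · rw [hq.continuous_iff]
    exact hsymm ▸ continuous_quotient_mk'

/-- For the group `H` of right multiplications by unit complex numbers on `ℍ`
(viewed as a `2`-dimensional complex space), the map `π(v) = v i v̄` has image the purely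
imaginary quaternions `⟨i, j, k⟩ ≅ ℝ³`, and `π v₁ = π v₂` iff `v₁ = v₂ z` for some
complex `z` with `|z| = 1`. Consequently the orbit space `ℍ/H` is homeomorphic to `ℝ³`. -/
theorem stmt_15 :
    (Set.range hopf = {q : Quaternion ℝ | q.re = 0}) ∧
    (∀ v₁ v₂ : Quaternion ℝ, hopf v₁ = hopf v₂ ↔
      ∃ z : Quaternion ℝ, z.imJ = 0 ∧ z.imK = 0 ∧ ‖z‖ = 1 ∧ v₁ = v₂ * z) ∧
    Nonempty ((Quotient (Setoid.ker hopf)) ≃ₜ EuclideanSpace ℝ (Fin 3)) := by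
  refine ⟨?_, hopf_iff, ?_⟩
  · ext q
    exact ⟨by rintro ⟨v, rfl⟩; exact hopf_re v, fun h => hopf_surj_aux q h⟩
  · rw [ker_eq]
    exact quot_homeo
end
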